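/- Let g : ℝ → ℝ be real-analytic at z₀ in the sense that λ ↦ g(z₀ + λ) has a convergent power series on a ball of radius r > 0. Then the formal Di Paola–Falsone series Σ_{j=1}^∞ g⁽ʲ⁾(z₀) λʲ/j! has positive radius of convergence, where g⁽¹⁾ = g, g⁽ʲ⁺¹⁾ = g · (g⁽ʲ⁾)'. -/

import Mathlib

open scoped ENNReal NNReal

noncomputable def gIter (g : ℝ → ℝ) : ℕ → ℝ → ℝ
  | 0 => fun _ => 0
  | 1 => g
  | (j+2) => fun x => g x * deriv (gIter g (j+1)) x

open Finset

private lemma choose_le_two_pow' (n k : ℕ) : n.choose k ≤ 2 ^ n := by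
  rcases le_or_gt k n with h | h
  · calc n.choose k ≤ ∑ i ∈ range (n+1), n.choose i :=
        single_le_sum (fun i _ => Nat.zero_le _) (mem_range.mpr (Nat.lt_succ_of_le h))
    _ = 2 ^ n := Nat.sum_range_choose n
  · simp [Nat.choose_eq_zero_of_lt h]

private lemma hockey (n r : ℕ) :
    ∑ m ∈ range (n+1), (m + r).choose r = (n + r + 1).choose (r + 1) := by
  induction n with
  | zero => simp
  | succ n ih =>
    rw [Finset.sum_range_succ, ih]
    have h1 : n + 1 + r = n + r + 1 := by omega
    have h2 : n + r + 1 + 1 = (n + r + 1) + 1 := rfl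
    rw [h1, h2, Nat.choose_succ_succ (n + r + 1) r]
    simp only [Nat.succ_eq_add_one]
    omega

private lemma sum_choose_eq (n j : ℕ) :
    ∑ k ∈ range (n+1), ((n - k) + 1 + 2*j).choose (n - k) = (n + 2*(j+1)).choose n := by
  have h1 : ∑ k ∈ range (n+1), ((n - k) + 1 + 2*j).choose (n - k)
      = ∑ m ∈ range (n+1), (m + 1 + 2*j).choose m := by
    have := Finset.sum_range_reflect (fun m => (m + 1 + 2*j).choose m) (n+1)
    simpa using this
  rw [h1]
  have h2 : ∀ m ∈ range (n+1), (m + 1 + 2*j).choose m = (m + (2*j+1)).choose (2*j+1) := by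
    intro m _
    have e : m + 1 + 2*j = m + (2*j+1) := by omega
    rw [e, Nat.choose_symm_add]
  rw [Finset.sum_congr rfl h2, hockey n (2*j+1)]
  have e1 : n + (2*j+1) + 1 = n + 2*(j+1) := by omega
  have e2 : 2*j+1+1 = 2*(j+1) := by omega
  rw [e1, e2]
  exact (Nat.choose_symm_add (a := n) (b := 2*(j+1))).symm

private lemma deriv_coeff_nat (m j : ℕ) :
    (m+1) * ((m + 1 + 2*j).choose (m+1)) = (2*j+1) * ((m + 1 + 2*j).choose m) := by
  have h := Nat.choose_succ_right_eq (m + 1 + 2*j) m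
  have e : m + 1 + 2*j - m = 2*j+1 := by omega
  rw [e] at h
  calc (m+1) * ((m + 1 + 2*j).choose (m+1)) = (m + 1 + 2*j).choose (m+1) * (m+1) :=
        Nat.mul_comm _ _
    _ = (m + 1 + 2*j).choose m * (2*j+1) := h
    _ = (2*j+1) * ((m + 1 + 2*j).choose m) := Nat.mul_comm _ _

private lemma summable_nat_mul_geom {x : ℝ} (hx : |x| < 1) :
    Summable (fun n : ℕ => ((n:ℝ)+1) * x^n) := by
  have h1 := summable_pow_mul_geometric_of_norm_lt_one (R := ℝ) 1 (by simpa using hx)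
  simp only [pow_one] at h1
  have h2 : Summable (fun n : ℕ => x^n) := summable_geometric_of_norm_lt_one (by simpa using hx)
  exact (h1.add h2).congr (fun n => by ring)

private lemma key (g : ℝ → ℝ) (z₀ : ℝ) (pc : ℕ → ℝ) (C a t : ℝ)
    (hC : 1 ≤ C) (ha : 1 ≤ a) (ht : 0 < t) (hta : a * t ≤ 1/8)
    (hpc : ∀ n, |pc n| ≤ C * a ^ n)
    (hgs : ∀ y : ℝ, |y| < t → HasSum (fun n => pc n * y ^ n) (g (z₀ + y))) :
    ∀ j : ℕ, ∃ c : ℕ → ℝ,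
      (∀ n, |c n| ≤ (C ^ (j+1) * a ^ j * ∏ i ∈ range j, (2*(i:ℝ)+1)) * a ^ n
          * ((n + 2*j).choose n : ℝ)) ∧
      (∀ y : ℝ, |y| < t → HasSum (fun n => c n * y ^ n) (gIter g (j+1) (z₀ + y))) := by
  have ha0 : (0:ℝ) < a := lt_of_lt_of_le one_pos ha
  have hC0 : (0:ℝ) < C := lt_of_lt_of_le one_pos hC
  intro j
  induction j with
  | zero =>
    refine ⟨pc, fun n => ?_, fun y hy => by simpa [gIter] using hgs y hy⟩
    simpa using hpc n
  | succ j ih =>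
    obtain ⟨c, hc, hcs⟩ := ih
    set K : ℝ := C ^ (j+1) * a ^ j * ∏ i ∈ range j, (2*(i:ℝ)+1) with hKdef
    have hP : (0:ℝ) < ∏ i ∈ range j, (2*(i:ℝ)+1) := Finset.prod_pos fun i _ => by positivity
    have hK : 0 < K := mul_pos (mul_pos (pow_pos hC0 _) (pow_pos ha0 _)) hP
    -- crude coefficient bound
    have hcb : ∀ n, |c n| ≤ K * 4 ^ j * (2*a) ^ n := by
      intro n
      calc |c n| ≤ K * a ^ n * ((n + 2*j).choose n : ℝ) := hc n
        _ ≤ K * a ^ n * ((2:ℝ) ^ (n + 2*j)) := by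
            refine mul_le_mul_of_nonneg_left ?_ (by positivity)
            have := choose_le_two_pow' (n + 2*j) n
            exact_mod_cast this
        _ = K * 4 ^ j * (2*a) ^ n := by
            rw [pow_add, pow_mul, mul_pow]
            ring
    -- derivative coefficients
    set d : ℕ → ℝ := fun m => ((m:ℝ)+1) * c (m+1) with hddef
    have habs : ∀ m, |d m| = ((m:ℝ)+1) * |c (m+1)| := by
      intro m
      rw [hddef]
      rw [abs_mul, abs_of_nonneg (by positivity : (0:ℝ) ≤ (m:ℝ)+1)]
    have hd : ∀ m, |d m| ≤ (2*(j:ℝ)+1) * K * a ^ (m+1) * ((m + 1 + 2*j).choose m : ℝ) := by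
      intro m
      rw [habs m]
      calc ((m:ℝ)+1) * |c (m+1)|
          ≤ ((m:ℝ)+1) * (K * a ^ (m+1) * (((m+1) + 2*j).choose (m+1) : ℝ)) :=
            mul_le_mul_of_nonneg_left (hc (m+1)) (by positivity)
        _ = (K * a^(m+1)) * (((m:ℝ)+1) * (((m+1) + 2*j).choose (m+1) : ℝ)) := by ring
        _ = (K * a^(m+1)) * ((2*(j:ℝ)+1) * ((m + 1 + 2*j).choose m : ℝ)) := by
            congr 1
            exact_mod_cast deriv_coeff_nat m j
        _ = (2*(j:ℝ)+1) * K * a^(m+1) * ((m + 1 + 2*j).choose m : ℝ) := by ring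
    have hd2 : ∀ m, |d m| ≤ (2*a*K*4^j) * (((m:ℝ)+1) * (2*a)^m) := by
      intro m
      rw [habs m]
      calc ((m:ℝ)+1) * |c (m+1)| ≤ ((m:ℝ)+1) * (K * 4^j * (2*a)^(m+1)) :=
            mul_le_mul_of_nonneg_left (hcb (m+1)) (by positivity)
        _ = (2*a*K*4^j) * (((m:ℝ)+1) * (2*a)^m) := by rw [pow_succ]; ring
    -- new coefficients
    set e : ℕ → ℝ := fun n => ∑ k ∈ range (n+1), pc k * d (n - k) with hedef
    -- coefficient bound for e
    have heb : ∀ n, |e n| ≤ (C ^ (j+1+1) * a ^ (j+1) * ∏ i ∈ range (j+1), (2*(i:ℝ)+1))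
        * a^n * ((n + 2*(j+1)).choose n : ℝ) := by
      intro n
      have h1 : |e n| ≤ ∑ k ∈ range (n+1),
          (C * (2*(j:ℝ)+1) * K * a^(n+1)) * (((n-k) + 1 + 2*j).choose (n-k) : ℝ) := by
        rw [hedef]
        refine (Finset.abs_sum_le_sum_abs _ _).trans (Finset.sum_le_sum fun k hk => ?_)
        have hkn : k ≤ n := Nat.lt_succ_iff.mp (Finset.mem_range.mp hk)
        rw [abs_mul]
        calc |pc k| * |d (n-k)|
            ≤ (C * a^k) * ((2*(j:ℝ)+1) * K * a^(n-k+1) * (((n-k) + 1 + 2*j).choose (n-k) : ℝ)) :=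
              mul_le_mul (hpc k) (hd (n-k)) (abs_nonneg _) (by positivity)
          _ = (C * (2*(j:ℝ)+1) * K * (a^k * a^(n-k+1))) * (((n-k)+1+2*j).choose (n-k) : ℝ) := by
              ring
          _ = (C * (2*(j:ℝ)+1) * K * a^(n+1)) * (((n-k)+1+2*j).choose (n-k) : ℝ) := by
              rw [← pow_add]
              have : k + (n-k+1) = n+1 := by omega
              rw [this]
      have h2 : ∑ k ∈ range (n+1),
          (C*(2*(j:ℝ)+1)*K*a^(n+1)) * (((n-k)+1+2*j).choose (n-k) : ℝ)
          = (C*(2*(j:ℝ)+1)*K*a^(n+1)) * ((n + 2*(j+1)).choose n : ℝ) := by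
        rw [← Finset.mul_sum]
        congr 1
        rw [← Nat.cast_sum, sum_choose_eq n j]
      calc |e n| ≤ _ := h1
        _ = (C*(2*(j:ℝ)+1)*K*a^(n+1)) * ((n + 2*(j+1)).choose n : ℝ) := h2
        _ = (C ^ (j+1+1) * a ^ (j+1) * ∏ i ∈ range (j+1), (2*(i:ℝ)+1))
            * a^n * ((n + 2*(j+1)).choose n : ℝ) := by
            rw [Finset.prod_range_succ, hKdef]
            ring
    -- summability facts
    have h2at : 2*a*t ≤ 1/4 := by nlinarith
    have hat0 : 0 ≤ a * t := by positivity
    have hgeom14 : Summable (fun n : ℕ => ((n:ℝ)+1) * (1/4:ℝ)^n) :=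
      summable_nat_mul_geom (by rw [abs_of_nonneg (by norm_num : (0:ℝ) ≤ 1/4)]; norm_num)
    have hdsum : ∀ y : ℝ, |y| ≤ t → Summable (fun m => ‖d m * y ^ m‖) := by
      intro y hy
      refine Summable.of_nonneg_of_le (fun m => norm_nonneg _) (fun m => ?_)
        (hgeom14.mul_left (2*a*K*4^j))
      rw [norm_mul, Real.norm_eq_abs, Real.norm_eq_abs, abs_pow]
      calc |d m| * |y|^m ≤ ((2*a*K*4^j) * (((m:ℝ)+1) * (2*a)^m)) * t^m := by
            apply mul_le_mul (hd2 m) (pow_le_pow_left₀ (abs_nonneg y) hy m) (by positivity)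
              (by positivity)
        _ = (2*a*K*4^j) * (((m:ℝ)+1) * (2*a*t)^m) := by rw [mul_pow]; ring
        _ ≤ (2*a*K*4^j) * (((m:ℝ)+1) * (1/4:ℝ)^m) := by
            apply mul_le_mul_of_nonneg_left ?_ (by positivity)
            exact mul_le_mul_of_nonneg_left (pow_le_pow_left₀ (by positivity) h2at m)
              (by positivity)
    have hpcsum : ∀ y : ℝ, |y| ≤ t → Summable (fun k => ‖pc k * y ^ k‖) := by
      intro y hy
      refine Summable.of_nonneg_of_le (fun k => norm_nonneg _) (fun k => ?_)
        ((summable_geometric_of_lt_one (by norm_num) (by norm_num : (1/8:ℝ) < 1)).mul_left C)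
      rw [norm_mul, Real.norm_eq_abs, Real.norm_eq_abs, abs_pow]
      calc |pc k| * |y|^k ≤ (C * a^k) * t^k :=
            mul_le_mul (hpc k) (pow_le_pow_left₀ (abs_nonneg y) hy k) (by positivity)
              (by positivity)
        _ = C * (a*t)^k := by rw [mul_pow]; ring
        _ ≤ C * (1/8:ℝ)^k :=
            mul_le_mul_of_nonneg_left (pow_le_pow_left₀ hat0 hta k) (le_of_lt hC0)
    -- termwise differentiation
    have hu : Summable (fun n : ℕ => |c n| * (n:ℝ) * t^(n-1)) := by
      refine Summable.of_nonneg_of_le (fun n => by positivity) (fun n => ?_)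
        (hgeom14.mul_left (8*a*K*4^j))
      cases n with
      | zero => simp; positivity
      | succ m =>
        have : |c (m+1)| * ((m+1 : ℕ):ℝ) * t^(m+1-1) ≤ (K * 4^j * (2*a)^(m+1)) * ((m:ℝ)+1) * t^m := by
          have h1 : ((m+1 : ℕ):ℝ) = (m:ℝ)+1 := by push_cast; ring
          rw [h1, Nat.add_sub_cancel]
          apply mul_le_mul_of_nonneg_right (mul_le_mul_of_nonneg_right (hcb (m+1))
            (by positivity)) (by positivity)
        refine this.trans ?_
        calc (K * 4^j * (2*a)^(m+1)) * ((m:ℝ)+1) * t^m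
            = (2*a*K*4^j) * (((m:ℝ)+1) * (2*a*t)^m) := by rw [pow_succ, mul_pow]; ring
          _ ≤ (2*a*K*4^j) * (((m:ℝ)+1) * (1/4:ℝ)^m) := by
              apply mul_le_mul_of_nonneg_left ?_ (by positivity)
              exact mul_le_mul_of_nonneg_left (pow_le_pow_left₀ (by positivity) h2at m)
                (by positivity)
          _ ≤ (8*a*K*4^j) * (((m+1 : ℕ):ℝ)+1) * (1/4:ℝ)^(m+1) := by
              have h4 : ((1:ℝ)/4)^m = 4 * (1/4:ℝ)^(m+1) := by
                rw [pow_succ]; ring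
              rw [h4]
              have hmm : ((m:ℝ)+1) ≤ ((m+1 : ℕ):ℝ)+1 := by push_cast; linarith
              calc (2*a*K*4^j) * (((m:ℝ)+1) * (4 * (1/4:ℝ)^(m+1)))
                  = (8*a*K*4^j) * (((m:ℝ)+1)) * (1/4:ℝ)^(m+1) := by ring
                _ ≤ (8*a*K*4^j) * (((m+1 : ℕ):ℝ)+1) * (1/4:ℝ)^(m+1) := by
                    apply mul_le_mul_of_nonneg_right (mul_le_mul_of_nonneg_left hmm
                      (by positivity)) (by positivity)
          _ = (8*a*K*4^j) * ((((m+1 : ℕ):ℝ)+1) * (1/4:ℝ)^(m+1)) := by ring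
    have hsum0 : Summable (fun n : ℕ => c n * (0:ℝ)^n) := by
      refine summable_of_ne_finset_zero (s := {0}) (fun n hn => ?_)
      have hn0 : n ≠ 0 := by simpa using hn
      simp [zero_pow hn0]
    have hderiv : ∀ y ∈ Metric.ball (0:ℝ) t,
        HasDerivAt (fun z => ∑' n, c n * z ^ n) (∑' n, c n * ((n:ℝ) * y ^ (n-1))) y := by
      intro y hy
      refine hasDerivAt_tsum_of_isPreconnected (u := fun n => |c n| * (n:ℝ) * t^(n-1)) hu
        Metric.isOpen_ball (convex_ball _ _).isPreconnected
        (fun n z _ => HasDerivAt.const_mul (c n) (hasDerivAt_pow n z))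
        (fun n z hz => ?_) (Metric.mem_ball_self ht) hsum0 hy
      rw [Real.norm_eq_abs, abs_mul, abs_mul, abs_pow, Nat.abs_cast, ← mul_assoc]
      have hzt : |z| ≤ t := by
        rw [Metric.mem_ball, Real.dist_eq, sub_zero] at hz
        exact le_of_lt hz
      exact mul_le_mul_of_nonneg_left (pow_le_pow_left₀ (abs_nonneg z) hzt _) (by positivity)
    refine ⟨e, heb, fun y hy => ?_⟩
    have hyt : |y| ≤ t := le_of_lt hy
    have hymem : y ∈ Metric.ball (0:ℝ) t := by
      rw [Metric.mem_ball, Real.dist_eq, sub_zero]; exact hy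
    have heqF : (fun z => ∑' n, c n * z ^ n) =ᶠ[nhds y] (fun z => gIter g (j+1) (z₀ + z)) := by
      filter_upwards [Metric.isOpen_ball.mem_nhds hymem] with z hz
      have hzt : |z| < t := by
        rw [Metric.mem_ball, Real.dist_eq, sub_zero] at hz; exact hz
      exact (hcs z hzt).tsum_eq
    have hF : HasDerivAt (fun z => gIter g (j+1) (z₀ + z))
        (∑' n, c n * ((n:ℝ) * y ^ (n-1))) y :=
      (hderiv y hymem).congr_of_eventuallyEq heqF.symm
    have hG : HasDerivAt (gIter g (j+1)) (∑' n, c n * ((n:ℝ) * y^(n-1))) (z₀ + y) := by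
      have h1 : HasDerivAt (fun x : ℝ => x - z₀) 1 (z₀ + y) := (hasDerivAt_id _).sub_const z₀
      have h2 : HasDerivAt ((fun z => gIter g (j+1) (z₀ + z)) ∘ (fun x : ℝ => x - z₀))
          ((∑' n, c n * ((n:ℝ) * y^(n-1))) * 1) (z₀ + y) := by
        apply HasDerivAt.comp
        · rw [show z₀ + y - z₀ = y from by ring]
          exact hF
        · exact h1
      have h3 : ((fun z => gIter g (j+1) (z₀ + z)) ∘ (fun x : ℝ => x - z₀)) = gIter g (j+1) := by
        funext x
        simp [Function.comp]
      rw [h3, mul_one] at h2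
      exact h2
    have hDeq : deriv (gIter g (j+1)) (z₀ + y) = ∑' n, c n * ((n:ℝ) * y^(n-1)) := hG.deriv
    have hds := hdsum y hyt
    have hdsum' : Summable (fun m => d m * y ^ m) := hds.of_norm
    have hshift : ∑' n, c n * ((n:ℝ) * y^(n-1)) = ∑' m, d m * y^m := by
      have hsd : Summable (fun n => c n * ((n:ℝ) * y^(n-1))) := by
        refine Summable.of_norm_bounded hu (fun n => ?_)
        rw [Real.norm_eq_abs, abs_mul, abs_mul, abs_pow, Nat.abs_cast, ← mul_assoc]
        gcongr
      rw [hsd.tsum_eq_zero_add]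
      simp only [Nat.cast_zero, zero_mul, mul_zero, zero_add]
      apply tsum_congr
      intro m
      rw [hddef]
      simp only [Nat.add_sub_cancel]
      push_cast
      ring
    have hDsum : HasSum (fun m => d m * y ^ m) (deriv (gIter g (j+1)) (z₀ + y)) := by
      rw [hDeq, hshift]
      exact hdsum'.hasSum
    have hpcs := hpcsum y hyt
    have hprod := hasSum_sum_range_mul_of_summable_norm hpcs hds
    rw [(hgs y hy).tsum_eq, hDsum.tsum_eq] at hprod
    have hterm : (fun n => ∑ k ∈ range (n+1), (pc k * y^k) * (d (n-k) * y^(n-k)))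
        = fun n => e n * y^n := by
      funext n
      rw [hedef]
      simp only
      rw [Finset.sum_mul]
      apply Finset.sum_congr rfl
      intro k hk
      have hkn : k ≤ n := Nat.lt_succ_iff.mp (Finset.mem_range.mp hk)
      have hy2 : y^k * y^(n-k) = y^n := by
        rw [← pow_add]
        congr 1
        omega
      calc (pc k * y^k) * (d (n-k) * y^(n-k)) = pc k * d (n-k) * (y^k * y^(n-k)) := by ring
        _ = pc k * d (n-k) * y^n := by rw [hy2]
    rw [hterm] at hprod
    show HasSum (fun n => e n * y^n) (gIter g (j+1+1) (z₀+y))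
    have hgiter : gIter g (j+1+1) (z₀+y) = g (z₀+y) * deriv (gIter g (j+1)) (z₀+y) := rfl
    rw [hgiter]
    exact hprod

theorem stmt19 (g : ℝ → ℝ) (z₀ : ℝ) (r : ENNReal) (hr : 0 < r)
    (p : FormalMultilinearSeries ℝ ℝ ℝ)
    (hg : HasFPowerSeriesOnBall (fun l => g (z₀ + l)) p 0 r) :
    ∃ R : ℝ, 0 < R ∧ ∀ l : ℝ, |l| < R →
      Summable (fun j : ℕ => gIter g (j + 1) z₀ * l ^ (j + 1) / (Nat.factorial (j + 1))) := by
  obtain ⟨ε, hε0, hεr⟩ := ENNReal.lt_iff_exists_nnreal_btwn.mp hr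
  have hε0' : (0:ℝ) < (ε:ℝ) := by
    have : (0:ℝ≥0) < ε := by exact_mod_cast hε0
    exact_mod_cast this
  have hrad : (ε:ℝ≥0∞) < p.radius := lt_of_lt_of_le hεr hg.r_le
  obtain ⟨C₀, hC₀, hb⟩ := p.norm_mul_pow_le_of_lt_radius hrad
  set a : ℝ := max (ε:ℝ)⁻¹ 1 with hadef
  set C : ℝ := max C₀ 1 with hCdef
  have ha1 : 1 ≤ a := le_max_right _ _
  have hC1 : 1 ≤ C := le_max_right _ _
  have ha0 : (0:ℝ) < a := lt_of_lt_of_le one_pos ha1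
  have hC0' : (0:ℝ) < C := lt_of_lt_of_le one_pos hC1
  have hpc : ∀ n, |p.coeff n| ≤ C * a ^ n := by
    intro n
    have h1 : |p.coeff n| ≤ ‖p n‖ := by
      have h := (p n).le_opNorm (1 : Fin n → ℝ)
      simp only [Pi.one_apply, norm_one, Finset.prod_const_one, mul_one] at h
      show |p n 1| ≤ ‖p n‖
      rw [← Real.norm_eq_abs]
      exact h
    have h2 : ‖p n‖ ≤ C₀ * ((ε:ℝ)⁻¹)^n := by
      have hεn : (0:ℝ) < (ε:ℝ)^n := pow_pos hε0' n
      rw [inv_pow]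
      calc ‖p n‖ = ‖p n‖ * (ε:ℝ)^n * ((ε:ℝ)^n)⁻¹ := by field_simp
        _ ≤ C₀ * ((ε:ℝ)^n)⁻¹ :=
            mul_le_mul_of_nonneg_right (hb n) (by positivity)
    calc |p.coeff n| ≤ C₀ * ((ε:ℝ)⁻¹)^n := h1.trans h2
      _ ≤ C * a^n := mul_le_mul (le_max_left _ _)
          (pow_le_pow_left₀ (by positivity) (le_max_left _ _) n) (by positivity)
          (le_of_lt hC0')
  set t : ℝ := min ((ε:ℝ)/2) (1/(8*a)) with htdef
  have ht0 : (0:ℝ) < t := lt_min (by positivity) (by positivity)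
  have htε : t < (ε:ℝ) := lt_of_le_of_lt (min_le_left _ _) (by linarith)
  have hta : a * t ≤ 1/8 := by
    have h := min_le_right ((ε:ℝ)/2) (1/(8*a))
    calc a * t ≤ a * (1/(8*a)) := mul_le_mul_of_nonneg_left h (le_of_lt ha0)
      _ = 1/8 := by field_simp
  have hgs : ∀ y : ℝ, |y| < t → HasSum (fun n => p.coeff n * y ^ n) (g (z₀ + y)) := by
    intro y hy
    have hym : y ∈ Metric.eball (0:ℝ) r := by
      rw [Metric.mem_eball, edist_zero_right]
      have h1 : (‖y‖₊ : ℝ≥0∞) < (ε:ℝ≥0∞) := by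
        rw [ENNReal.coe_lt_coe, ← NNReal.coe_lt_coe, coe_nnnorm, Real.norm_eq_abs]
        exact lt_trans hy htε
      exact lt_trans h1 hεr
    have h := hg.hasSum hym
    simp only [zero_add] at h
    have h2 : (fun n => p.coeff n * y^n) = (fun n => p n fun _ => y) := by
      funext n
      rw [FormalMultilinearSeries.apply_eq_pow_smul_coeff, smul_eq_mul, mul_comm]
    rw [h2]
    exact h
  have hkey := key g z₀ p.coeff C a t hC1 ha1 ht0 hta hpc hgs
  choose c hc1 hc2 using hkey
  have hval : ∀ j, gIter g (j+1) z₀ = c j 0 := by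
    intro j
    have h0 : |(0:ℝ)| < t := by simpa using ht0
    have hs := hc2 j 0 h0
    rw [add_zero] at hs
    have hsingle : HasSum (fun n => c j n * (0:ℝ)^n) (c j 0) := by
      have h := hasSum_single (f := fun n => c j n * (0:ℝ)^n) 0
        (fun b hb => by simp [zero_pow hb])
      simpa using h
    exact hs.unique hsingle
  have hKb : ∀ j : ℕ, |gIter g (j+1) z₀| ≤ C^(j+1) * a^j * (2^j * (Nat.factorial j : ℝ)) := by
    intro j
    rw [hval j]
    have h1 := hc1 j 0
    simp only [pow_zero, mul_one, Nat.choose_zero_right, Nat.cast_one] at h1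
    have hP : ∏ i ∈ range j, (2*(i:ℝ)+1) ≤ 2^j * (Nat.factorial j : ℝ) := by
      calc ∏ i ∈ range j, (2*(i:ℝ)+1) ≤ ∏ i ∈ range j, (2*((i:ℝ)+1)) :=
            Finset.prod_le_prod (fun i _ => by positivity) (fun i _ => by linarith)
        _ = 2^j * ∏ i ∈ range j, ((i:ℝ)+1) := by
            rw [Finset.prod_mul_distrib, Finset.prod_const, Finset.card_range]
        _ = 2^j * (Nat.factorial j : ℝ) := by
            congr 1
            have h := Finset.prod_range_add_one_eq_factorial j
            exact_mod_cast congrArg (Nat.cast (R := ℝ)) h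
    calc |c j 0| ≤ C^(j+1) * a^j * (∏ i ∈ range j, (2*(i:ℝ)+1)) := h1
      _ ≤ C^(j+1) * a^j * (2^j * (Nat.factorial j : ℝ)) :=
          mul_le_mul_of_nonneg_left hP (by positivity)
  refine ⟨(2*C*a+1)⁻¹, by positivity, fun l hl => ?_⟩
  set x : ℝ := 2*C*a*|l| with hxdef
  have hx0 : (0:ℝ) ≤ x := by positivity
  have hx1 : x < 1 := by
    have h2 : (0:ℝ) < 2*C*a := by positivity
    calc x = 2*C*a*|l| := rfl
      _ < 2*C*a*(2*C*a+1)⁻¹ := by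
          exact mul_lt_mul_of_pos_left hl h2
      _ < 1 := by
          rw [← div_eq_mul_inv, div_lt_one (by positivity)]
          linarith
  have hgeo : Summable (fun j : ℕ => x^(j+1)) := by
    have h := (summable_geometric_of_lt_one hx0 hx1).mul_left x
    refine h.congr (fun j => ?_)
    rw [pow_succ]
    ring
  refine Summable.of_norm_bounded hgeo (fun j => ?_)
  rw [Real.norm_eq_abs, abs_div, abs_mul, abs_pow, Nat.abs_cast]
  have hfac : (0:ℝ) < (Nat.factorial (j+1) : ℝ) := by exact_mod_cast Nat.factorial_pos _
  rw [div_le_iff₀ hfac]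
  have h1 : C^(j+1)*a^j*(2:ℝ)^j ≤ (2*C*a)^(j+1) := by
    have he : (2*C*a)^(j+1) = 2^(j+1)*C^(j+1)*a^(j+1) := by
      rw [mul_pow, mul_pow]
    rw [he]
    have h2 : (2:ℝ)^j ≤ 2^(j+1) := pow_le_pow_right₀ (by norm_num) (by omega)
    have h3 : a^j ≤ a^(j+1) := pow_le_pow_right₀ ha1 (by omega)
    calc C^(j+1)*a^j*(2:ℝ)^j ≤ C^(j+1)*a^(j+1)*(2:ℝ)^(j+1) := by
          apply mul_le_mul (mul_le_mul_of_nonneg_left h3 (by positivity)) h2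
            (by positivity) (by positivity)
      _ = 2^(j+1)*C^(j+1)*a^(j+1) := by ring
  have h2 : (Nat.factorial j : ℝ) ≤ (Nat.factorial (j+1) : ℝ) := by
    exact_mod_cast Nat.factorial_le (by omega)
  calc |gIter g (j+1) z₀| * |l|^(j+1)
      ≤ (C^(j+1)*a^j*(2^j*(Nat.factorial j : ℝ))) * |l|^(j+1) :=
        mul_le_mul_of_nonneg_right (hKb j) (by positivity)
    _ = (C^(j+1)*a^j*(2:ℝ)^j) * |l|^(j+1) * (Nat.factorial j : ℝ) := by ring
    _ ≤ (2*C*a)^(j+1) * |l|^(j+1) * (Nat.factorial (j+1) : ℝ) := by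
        apply mul_le_mul (mul_le_mul_of_nonneg_right h1 (by positivity)) h2
          (by positivity) (by positivity)
    _ = x^(j+1) * (Nat.factorial (j+1) : ℝ) := by
        rw [hxdef]; ring
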